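/- For every integer k ≥ 1 and every integer n ≥ 3, the incidence chromatic number of the toroidal grid satisfies χ_i(T_{3k,n}) ≤ 6. -/

import Mathlib

open SimpleGraph

/-- The type of incidences of a graph `G`: pairs `(v, e)` where `e` is an edge of `G`
incident to the vertex `v`. -/
def Incidence {V : Type*} (G : SimpleGraph V) : Type _ :=
  {p : V × Sym2 V // p.2 ∈ G.edgeSet ∧ p.1 ∈ p.2}

/-- The graph on the incidences of `G` in which two distinct incidences `(v,e)` and `(w,f)`
are adjacent iff `v = w`, or `e = f`, or the edge `vw` equals `e` or `f`. -/
def incidenceGraph {V : Type*} (G : SimpleGraph V) : SimpleGraph (Incidence G) where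
  Adj i j := i ≠ j ∧
    (i.1.1 = j.1.1 ∨ i.1.2 = j.1.2 ∨ s(i.1.1, j.1.1) = i.1.2 ∨ s(i.1.1, j.1.1) = j.1.2)
  symm := ⟨by
    rintro ⟨⟨v, e⟩, hi⟩ ⟨⟨w, f⟩, hj⟩ ⟨hne, h⟩
    refine ⟨fun h' => hne h'.symm, ?_⟩
    simp only at h ⊢
    rcases h with h | h | h | h
    · exact Or.inl h.symm
    · exact Or.inr (Or.inl h.symm)
    · exact Or.inr (Or.inr (Or.inr ((Sym2.eq_swap).trans h)))
    · exact Or.inr (Or.inr (Or.inl ((Sym2.eq_swap).trans h)))⟩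
  loopless := ⟨fun i h => h.1 rfl⟩

/-- The incidence chromatic number of a graph: the least number of colors in a proper
coloring of its incidences. -/
noncomputable def incidenceChromaticNumber {V : Type*} (G : SimpleGraph V) : ℕ∞ :=
  (incidenceGraph G).chromaticNumber

/-- The square of a graph `G`: distinct vertices are adjacent iff they are at distance
at most 2 in `G`. -/
def SimpleGraph.square {V : Type*} (G : SimpleGraph V) : SimpleGraph V where
  Adj u v := u ≠ v ∧ (G.Adj u v ∨ ∃ w, G.Adj u w ∧ G.Adj w v)
  symm := ⟨by
    rintro u v ⟨hne, h | ⟨w, h1, h2⟩⟩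
    · exact ⟨hne.symm, Or.inl h.symm⟩
    · exact ⟨hne.symm, Or.inr ⟨w, h2.symm, h1.symm⟩⟩⟩
  loopless := ⟨fun v h => h.1 rfl⟩

/-- The toroidal grid `T_{m,n} = C_m □ C_n`. -/
def toroidalGrid (m n : ℕ) : SimpleGraph (Fin m × Fin n) :=
  SimpleGraph.boxProd (SimpleGraph.cycleGraph m) (SimpleGraph.cycleGraph n)


namespace IncAux

abbrev Col := Fin 3 → Fin 6 × Fin 6 × Fin 6 × Fin 6

def cR (c : Col) (t : ℕ) : Fin 6 := (c ⟨t % 3, Nat.mod_lt t (by norm_num)⟩).1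
def cL (c : Col) (t : ℕ) : Fin 6 := (c ⟨t % 3, Nat.mod_lt t (by norm_num)⟩).2.1
def cU (c : Col) (t : ℕ) : Fin 6 := (c ⟨t % 3, Nat.mod_lt t (by norm_num)⟩).2.2.1
def cD (c : Col) (t : ℕ) : Fin 6 := (c ⟨t % 3, Nat.mod_lt t (by norm_num)⟩).2.2.2

lemma cR_congr (c : Col) {a b : ℕ} (h : a % 3 = b % 3) : cR c a = cR c b := by
  unfold cR; congr 2 <;> simp [h]
lemma cL_congr (c : Col) {a b : ℕ} (h : a % 3 = b % 3) : cL c a = cL c b := by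
  unfold cL; congr 2 <;> simp [h]
lemma cU_congr (c : Col) {a b : ℕ} (h : a % 3 = b % 3) : cU c a = cU c b := by
  unfold cU; congr 2 <;> simp [h]
lemma cD_congr (c : Col) {a b : ℕ} (h : a % 3 = b % 3) : cD c a = cD c b := by
  unfold cD; congr 2 <;> simp [h]

/-- internal constraints of a column -/
def ok (c : Col) : Prop := ∀ t < 3,
  (cR c t ≠ cL c t ∧ cR c t ≠ cU c t ∧ cR c t ≠ cD c t ∧
   cL c t ≠ cU c t ∧ cL c t ≠ cD c t ∧ cU c t ≠ cD c t) ∧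
  (cR c t ≠ cR c (t+1) ∧ cR c t ≠ cL c (t+1) ∧ cR c t ≠ cU c (t+1) ∧ cR c t ≠ cD c (t+1)) ∧
  (cL c (t+1) ≠ cR c t ∧ cL c (t+1) ≠ cL c t ∧ cL c (t+1) ≠ cU c t ∧ cL c (t+1) ≠ cD c t)

/-- vertical compatibility of consecutive columns -/
def compat (c c' : Col) : Prop := ∀ t < 3,
  (cU c t ≠ cR c' t ∧ cU c t ≠ cL c' t ∧ cU c t ≠ cU c' t ∧ cU c t ≠ cD c' t) ∧
  (cD c' t ≠ cR c t ∧ cD c' t ≠ cL c t ∧ cD c' t ≠ cU c t ∧ cD c' t ≠ cD c t)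

instance : DecidablePred ok := fun c => by unfold ok; infer_instance
instance : ∀ c, DecidablePred (compat c) := fun c c' => by unfold compat; infer_instance

lemma ok_all {c : Col} (h : ok c) (t : ℕ) :
  (cR c t ≠ cL c t ∧ cR c t ≠ cU c t ∧ cR c t ≠ cD c t ∧
   cL c t ≠ cU c t ∧ cL c t ≠ cD c t ∧ cU c t ≠ cD c t) ∧
  (cR c t ≠ cR c (t+1) ∧ cR c t ≠ cL c (t+1) ∧ cR c t ≠ cU c (t+1) ∧ cR c t ≠ cD c (t+1)) ∧
  (cL c (t+1) ≠ cR c t ∧ cL c (t+1) ≠ cL c t ∧ cL c (t+1) ≠ cU c t ∧ cL c (t+1) ≠ cD c t) := by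
  have h1 : t % 3 % 3 = t % 3 := by omega
  have h2 : (t % 3 + 1) % 3 = (t + 1) % 3 := by omega
  have := h (t % 3) (by omega)
  rwa [cR_congr c h1, cL_congr c h1, cU_congr c h1, cD_congr c h1,
    cR_congr c h2, cL_congr c h2, cU_congr c h2, cD_congr c h2] at this

lemma compat_all {c c' : Col} (h : compat c c') (t : ℕ) :
  (cU c t ≠ cR c' t ∧ cU c t ≠ cL c' t ∧ cU c t ≠ cU c' t ∧ cU c t ≠ cD c' t) ∧
  (cD c' t ≠ cR c t ∧ cD c' t ≠ cL c t ∧ cD c' t ≠ cU c t ∧ cD c' t ≠ cD c t) := by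
  have h1 : t % 3 % 3 = t % 3 := by omega
  have := h (t % 3) (by omega)
  rwa [cR_congr c h1, cL_congr c h1, cU_congr c h1, cD_congr c h1,
    cR_congr c' h1, cL_congr c' h1, cU_congr c' h1, cD_congr c' h1] at this

def C0 : Col := ![(2,4,3,5),(4,0,5,1),(0,2,1,3)]
def C1 : Col := ![(4,0,5,1),(0,2,1,3),(2,4,3,5)]
def C2 : Col := ![(0,2,1,3),(2,4,3,5),(4,0,5,1)]
def D1 : Col := ![(0,5,4,1),(1,2,4,3),(3,0,2,4)]
def D2 : Col := ![(5,0,2,3),(2,1,3,0),(4,5,3,1)]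
def D3 : Col := ![(3,0,1,4),(0,5,2,4),(5,1,4,2)]
def E1 : Col := ![(2,1,5,0),(1,4,0,3),(3,2,0,5)]
def E2 : Col := ![(0,4,2,3),(4,1,5,2),(5,3,2,1)]
def E3 : Col := ![(4,1,0,5),(2,3,1,0),(3,5,0,4)]
def E4 : Col := ![(4,3,1,2),(3,0,2,5),(5,1,4,2)]

example : ok C0 ∧ ok C1 ∧ ok C2 ∧ ok D1 ∧ ok D2 ∧ ok D3 ∧ ok E1 ∧ ok E2 ∧ ok E3 ∧ ok E4 := by
  decide

example : compat C0 C1 ∧ compat C1 C2 ∧ compat C2 C0 ∧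
    compat C0 D1 ∧ compat D1 D2 ∧ compat D2 D3 ∧ compat D3 C0 ∧
    compat C0 E1 ∧ compat E1 E2 ∧ compat E2 E3 ∧ compat E3 E4 ∧ compat E4 C0 := by
  decide


def Cc (y : ℕ) : Col := if y % 3 = 0 then C0 else if y % 3 = 1 then C1 else C2
def Db (i : ℕ) : Col := if i = 0 then C0 else if i = 1 then D1 else if i = 2 then D2 else D3
def Eb (i : ℕ) : Col :=
  if i = 0 then C0 else if i = 1 then E1 else if i = 2 then E2 else if i = 3 then E3 else E4

def typ (n y : ℕ) : Col :=
  if n % 3 = 0 then Cc y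
  else if n % 3 = 1 then (if y < n - 4 then Cc y else Db (y - (n - 4)))
  else (if y < n - 5 then Cc y else Eb (y - (n - 5)))

lemma ok_typ (n y : ℕ) : ok (typ n y) := by
  have hC : ∀ z, ok (Cc z) := by
    intro z; unfold Cc; split_ifs <;> decide
  have hD : ∀ i, ok (Db i) := by
    intro i; unfold Db; split_ifs <;> decide
  have hE : ∀ i, ok (Eb i) := by
    intro i; unfold Eb; split_ifs <;> decide
  unfold typ; split_ifs <;> first | exact hC _ | exact hD _ | exact hE _

lemma compat_Cc {a b : ℕ} (h : b % 3 = (a + 1) % 3) : compat (Cc a) (Cc b) := by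
  unfold Cc
  have h3 : a % 3 = 0 ∨ a % 3 = 1 ∨ a % 3 = 2 := by omega
  rcases h3 with h3 | h3 | h3 <;>
    [ (have hb : b % 3 = 1 := by omega); (have hb : b % 3 = 2 := by omega);
      (have hb : b % 3 = 0 := by omega)] <;>
    simp [h3, hb] <;> decide

lemma Cc_last {n : ℕ} (h3 : n % 3 = 0) (hn : 3 ≤ n) : Cc (n - 1) = C2 := by
  unfold Cc
  have h1 : (n-1) % 3 = 2 := by omega
  simp [h1]

lemma typ0 {n y : ℕ} (hr : n % 3 = 0) : typ n y = Cc y := by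
  unfold typ; rw [if_pos hr]

lemma typ1m {n y : ℕ} (hr : n % 3 = 1) (h : y < n - 4) : typ n y = Cc y := by
  unfold typ; rw [if_neg (by omega), if_pos hr, if_pos h]

lemma typ1b {n y : ℕ} (hr : n % 3 = 1) (h : ¬ y < n - 4) : typ n y = Db (y - (n - 4)) := by
  unfold typ; rw [if_neg (by omega), if_pos hr, if_neg h]

lemma typ2m {n y : ℕ} (hr : n % 3 = 2) (h : y < n - 5) : typ n y = Cc y := by
  unfold typ; rw [if_neg (by omega), if_neg (by omega), if_pos h]

lemma typ2b {n y : ℕ} (hr : n % 3 = 2) (h : ¬ y < n - 5) : typ n y = Eb (y - (n - 5)) := by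
  unfold typ; rw [if_neg (by omega), if_neg (by omega), if_neg h]

lemma Cc_eq {y : ℕ} (h : y % 3 = 2) : Cc y = C2 := by unfold Cc; simp [h]

lemma compat_chain (n : ℕ) (hn : 3 ≤ n) (y : ℕ) (hy : y < n) :
    compat (typ n y) (typ n ((y + 1) % n)) := by
  have hmod : n % 3 = 0 ∨ n % 3 = 1 ∨ n % 3 = 2 := by omega
  rcases hmod with hr | hr | hr
  · rcases Nat.lt_or_ge (y+1) n with h | h
    · rw [typ0 hr, Nat.mod_eq_of_lt h, typ0 hr]
      exact compat_Cc (by omega)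
    · have hy1 : y + 1 = n := by omega
      rw [typ0 hr, typ0 hr, hy1, Nat.mod_self, Cc_eq (by omega), show Cc 0 = C0 by decide]
      decide
  · have hn4 : 4 ≤ n := by omega
    rcases Nat.lt_or_ge (y+1) (n-4) with h | h
    · rw [typ1m hr (by omega), Nat.mod_eq_of_lt (by omega), typ1m hr h]
      exact compat_Cc (by omega)
    · rcases Nat.lt_or_ge (y+1) n with h2 | h2
      · rw [Nat.mod_eq_of_lt h2, typ1b (y := y+1) hr (by omega)]
        rcases Nat.lt_or_ge y (n-4) with h3 | h3
        · rw [typ1m hr h3, Cc_eq (by omega), show y + 1 - (n-4) = 0 by omega,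
            show Db 0 = C0 by decide]
          decide
        · rw [typ1b hr (by omega)]
          have hi : y - (n-4) = 0 ∨ y - (n-4) = 1 ∨ y - (n-4) = 2 := by omega
          rcases hi with hi | hi | hi <;>
            rw [show y + 1 - (n-4) = (y - (n-4)) + 1 by omega, hi] <;> decide
      · have hy1 : y + 1 = n := by omega
        rw [hy1, Nat.mod_self, typ1b hr (by omega), show y - (n-4) = 3 by omega,
          show Db 3 = D3 by decide]
        rcases Nat.lt_or_ge 0 (n-4) with h4 | h4
        · rw [typ1m hr h4, show Cc 0 = C0 by decide]; decide
        · rw [typ1b hr (by omega), show (0:ℕ) - (n-4) = 0 by omega, show Db 0 = C0 by decide]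
          decide
  · have hn5 : 5 ≤ n := by omega
    rcases Nat.lt_or_ge (y+1) (n-5) with h | h
    · rw [typ2m hr (by omega), Nat.mod_eq_of_lt (by omega), typ2m hr h]
      exact compat_Cc (by omega)
    · rcases Nat.lt_or_ge (y+1) n with h2 | h2
      · rw [Nat.mod_eq_of_lt h2, typ2b (y := y+1) hr (by omega)]
        rcases Nat.lt_or_ge y (n-5) with h3 | h3
        · rw [typ2m hr h3, Cc_eq (by omega), show y + 1 - (n-5) = 0 by omega,
            show Eb 0 = C0 by decide]
          decide
        · rw [typ2b hr (by omega)]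
          have hi : y - (n-5) = 0 ∨ y - (n-5) = 1 ∨ y - (n-5) = 2 ∨ y - (n-5) = 3 := by omega
          rcases hi with hi | hi | hi | hi <;>
            rw [show y + 1 - (n-5) = (y - (n-5)) + 1 by omega, hi] <;> decide
      · have hy1 : y + 1 = n := by omega
        rw [hy1, Nat.mod_self, typ2b hr (by omega), show y - (n-5) = 4 by omega,
          show Eb 4 = E4 by decide]
        rcases Nat.lt_or_ge 0 (n-5) with h4 | h4
        · rw [typ2m hr h4, show Cc 0 = C0 by decide]; decide
        · rw [typ2b hr (by omega), show (0:ℕ) - (n-5) = 0 by omega, show Eb 0 = C0 by decide]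
          decide


section Graph

open SimpleGraph

variable {m n : ℕ} [NeZero m] [NeZero n]

lemma fin_val_add_one (hm : 3 ≤ m) (a : Fin m) : ((a + 1 : Fin m)).val = (a.val + 1) % m := by
  rw [Fin.val_add, Fin.val_one', Nat.mod_eq_of_lt (show 1 < m by omega)]

lemma fin_add_one_ne (hm : 3 ≤ m) (a : Fin m) : a + 1 ≠ a := by
  intro h
  have h1 : ((a + 1 : Fin m)).val = a.val := congrArg Fin.val h
  rw [fin_val_add_one hm] at h1
  rcases Nat.lt_or_ge (a.val + 1) m with h2 | h2
  · rw [Nat.mod_eq_of_lt h2] at h1; omega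
  · have h3 : a.val + 1 = m := by have := a.isLt; omega
    rw [h3, Nat.mod_self] at h1; omega

lemma fin_add_two_ne (hm : 3 ≤ m) (a : Fin m) : a + 1 + 1 ≠ a := by
  intro h
  have h1 : ((a + 1 + 1 : Fin m)).val = a.val := congrArg Fin.val h
  rw [fin_val_add_one hm, fin_val_add_one hm] at h1
  have ha := a.isLt
  rcases Nat.lt_or_ge (a.val + 1) m with h2 | h2
  · rw [Nat.mod_eq_of_lt h2] at h1
    rcases Nat.lt_or_ge (a.val + 2) m with h3 | h3
    · rw [Nat.mod_eq_of_lt h3] at h1; omega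
    · have : a.val + 2 = m := by omega
      rw [this, Nat.mod_self] at h1; omega
  · have h3 : a.val + 1 = m := by omega
    rw [h3, Nat.mod_self, Nat.mod_eq_of_lt (by omega)] at h1; omega

lemma cyc_adj (hN : 3 ≤ m) {a b : Fin m} (h : (cycleGraph m).Adj a b) :
    a = b + 1 ∨ b = a + 1 := by
  rw [cycleGraph_adj'] at h
  have hone : ((1 : Fin m)).val = 1 := by
    rw [Fin.val_one', Nat.mod_eq_of_lt (by omega)]
  rcases h with h | h
  · left
    have h2 : a - b = 1 := Fin.ext (by rw [h, hone])
    rw [sub_eq_iff_eq_add] at h2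
    rw [h2, add_comm]
  · right
    have h2 : b - a = 1 := Fin.ext (by rw [h, hone])
    rw [sub_eq_iff_eq_add] at h2
    rw [h2, add_comm]

/-- the color of the arc from `v` to `u` -/
def colV (m n : ℕ) [NeZero m] [NeZero n] (v u : Fin m × Fin n) : Fin 6 :=
  if u.2 = v.2 then (if u.1 = v.1 + 1 then cR (typ n v.2.val) v.1.val
    else cL (typ n v.2.val) v.1.val)
  else (if u.2 = v.2 + 1 then cU (typ n v.2.val) v.1.val else cD (typ n v.2.val) v.1.val)

variable (hm : 3 ≤ m) (hn : 3 ≤ n)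
include hm hn

lemma colV_R (v : Fin m × Fin n) :
    colV m n v (v.1 + 1, v.2) = cR (typ n v.2.val) v.1.val := by
  unfold colV; rw [if_pos rfl, if_pos rfl]

lemma colV_L (v : Fin m × Fin n) (a : Fin m) (h : v.1 = a + 1) :
    colV m n v (a, v.2) = cL (typ n v.2.val) v.1.val := by
  unfold colV
  rw [if_pos rfl, if_neg]
  intro hc
  exact fin_add_two_ne hm a (by rw [← h, ← hc])

lemma colV_U (v : Fin m × Fin n) :
    colV m n v (v.1, v.2 + 1) = cU (typ n v.2.val) v.1.val := by
  unfold colV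
  rw [if_neg (fin_add_one_ne hn v.2), if_pos rfl]

lemma colV_D (v : Fin m × Fin n) (b : Fin n) (h : v.2 = b + 1) :
    colV m n v (v.1, b) = cD (typ n v.2.val) v.1.val := by
  unfold colV
  rw [if_neg, if_neg]
  · intro hc; exact fin_add_two_ne hn b (by rw [← h, ← hc])
  · intro hc; exact fin_add_one_ne hn b (by rw [h] at hc; exact hc.symm)

lemma adj_cases {v u : Fin m × Fin n} (h : (toroidalGrid m n).Adj v u) :
    u = (v.1 + 1, v.2) ∨ (∃ a, v.1 = a + 1 ∧ u = (a, v.2)) ∨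
    u = (v.1, v.2 + 1) ∨ (∃ b, v.2 = b + 1 ∧ u = (v.1, b)) := by
  unfold toroidalGrid at h
  rw [SimpleGraph.boxProd_adj] at h
  rcases h with ⟨h1, h2⟩ | ⟨h1, h2⟩
  · rcases cyc_adj hm h1 with h3 | h3
    · exact Or.inr (Or.inl ⟨u.1, h3, Prod.ext_iff.mpr ⟨rfl, h2.symm⟩⟩)
    · exact Or.inl (Prod.ext_iff.mpr ⟨h3, h2.symm⟩)
  · rcases cyc_adj hn h1 with h3 | h3
    · exact Or.inr (Or.inr (Or.inr ⟨u.2, h3, Prod.ext_iff.mpr ⟨h2.symm, rfl⟩⟩))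
    · exact Or.inr (Or.inr (Or.inl (Prod.ext_iff.mpr ⟨h2.symm, h3⟩)))

lemma colV_mem {u w : Fin m × Fin n} (h : (toroidalGrid m n).Adj u w) :
    colV m n u w = cR (typ n u.2.val) u.1.val ∨ colV m n u w = cL (typ n u.2.val) u.1.val ∨
    colV m n u w = cU (typ n u.2.val) u.1.val ∨ colV m n u w = cD (typ n u.2.val) u.1.val := by
  rcases adj_cases hm hn h with h1 | ⟨a, ha, h1⟩ | h1 | ⟨b, hb, h1⟩ <;> subst h1
  · exact Or.inl (colV_R hm hn u)
  · exact Or.inr (Or.inl (colV_L hm hn u a ha))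
  · exact Or.inr (Or.inr (Or.inl (colV_U hm hn u)))
  · exact Or.inr (Or.inr (Or.inr (colV_D hm hn u b hb)))

lemma P1 {v u u' : Fin m × Fin n} (h : (toroidalGrid m n).Adj v u)
    (h' : (toroidalGrid m n).Adj v u') (hne : u ≠ u') : colV m n v u ≠ colV m n v u' := by
  obtain ⟨⟨d1, d2, d3, d4, d5, d6⟩, -, -⟩ := ok_all (ok_typ n v.2.val) v.1.val
  rcases adj_cases hm hn h with h1 | ⟨a, ha, h1⟩ | h1 | ⟨b, hb, h1⟩ <;>
    rcases adj_cases hm hn h' with h2 | ⟨a', ha', h2⟩ | h2 | ⟨b', hb', h2⟩ <;>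
    subst h1 <;> subst h2
  · exact absurd rfl hne
  · rw [colV_R hm hn, colV_L hm hn v a' ha']; exact d1
  · rw [colV_R hm hn, colV_U hm hn]; exact d2
  · rw [colV_R hm hn, colV_D hm hn v b' hb']; exact d3
  · rw [colV_L hm hn v a ha, colV_R hm hn]; exact d1.symm
  · exact absurd (by rw [show a = a' from add_right_cancel (ha.symm.trans ha')]) hne
  · rw [colV_L hm hn v a ha, colV_U hm hn]; exact d4
  · rw [colV_L hm hn v a ha, colV_D hm hn v b' hb']; exact d5
  · rw [colV_U hm hn, colV_R hm hn]; exact d2.symm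
  · rw [colV_U hm hn, colV_L hm hn v a' ha']; exact d4.symm
  · exact absurd rfl hne
  · rw [colV_U hm hn, colV_D hm hn v b' hb']; exact d6
  · rw [colV_D hm hn v b hb, colV_R hm hn]; exact d3.symm
  · rw [colV_D hm hn v b hb, colV_L hm hn v a' ha']; exact d5.symm
  · rw [colV_D hm hn v b hb, colV_U hm hn]; exact d6.symm
  · exact absurd (by rw [show b = b' from add_right_cancel (hb.symm.trans hb')]) hne

lemma P2 (hdvd : 3 ∣ m) {v u w : Fin m × Fin n} (h : (toroidalGrid m n).Adj v u)
    (h' : (toroidalGrid m n).Adj u w) : colV m n v u ≠ colV m n u w := by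
  set c := typ n v.2.val with hc
  rcases adj_cases hm hn h with h1 | ⟨a, ha, h1⟩ | h1 | ⟨b, hb, h1⟩
  · -- u right of v
    have hu1 : u.1 = v.1 + 1 := by rw [h1]
    have hu2 : u.2 = v.2 := by rw [h1]
    rw [show colV m n v u = cR c v.1.val from by rw [h1]; exact colV_R hm hn v]
    have hcls : u.1.val % 3 = (v.1.val + 1) % 3 := by
      rw [hu1, fin_val_add_one hm, Nat.mod_mod_of_dvd _ hdvd]
    obtain ⟨-, ⟨e1, e2, e3, e4⟩, -⟩ := ok_all (ok_typ n v.2.val) v.1.val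
    rcases colV_mem hm hn h' with h2 | h2 | h2 | h2 <;> rw [h2, hu2, ← hc]
    · rw [cR_congr _ hcls]; exact e1
    · rw [cL_congr _ hcls]; exact e2
    · rw [cU_congr _ hcls]; exact e3
    · rw [cD_congr _ hcls]; exact e4
  · -- u left of v
    have hu1 : u.1 = a := by rw [h1]
    have hu2 : u.2 = v.2 := by rw [h1]
    rw [show colV m n v u = cL c v.1.val from by rw [h1]; exact colV_L hm hn v a ha]
    have hcls : v.1.val % 3 = (u.1.val + 1) % 3 := by
      rw [hu1, ha, fin_val_add_one hm, Nat.mod_mod_of_dvd _ hdvd]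
    obtain ⟨-, -, ⟨e1, e2, e3, e4⟩⟩ := ok_all (ok_typ n v.2.val) u.1.val
    rw [cL_congr _ hcls]
    rcases colV_mem hm hn h' with h2 | h2 | h2 | h2 <;> rw [h2, hu2, ← hc]
    · exact e1
    · exact e2
    · exact e3
    · exact e4
  · -- u above v
    have hu1 : u.1 = v.1 := by rw [h1]
    have hu2 : u.2 = v.2 + 1 := by rw [h1]
    rw [show colV m n v u = cU c v.1.val from by rw [h1]; exact colV_U hm hn v]
    have hcol : typ n u.2.val = typ n ((v.2.val + 1) % n) := by
      rw [hu2, fin_val_add_one hn]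
    have hcompat := compat_chain n hn v.2.val v.2.isLt
    obtain ⟨⟨e1, e2, e3, e4⟩, -⟩ := compat_all hcompat v.1.val
    rcases colV_mem hm hn h' with h2 | h2 | h2 | h2 <;> rw [h2, hu1, hcol]
    · exact e1
    · exact e2
    · exact e3
    · exact e4
  · -- u below v
    have hu1 : u.1 = v.1 := by rw [h1]
    have hu2 : u.2 = b := by rw [h1]
    rw [show colV m n v u = cD c v.1.val from by rw [h1]; exact colV_D hm hn v b hb]
    have hcol : c = typ n ((b.val + 1) % n) := by
      rw [hc, hb, fin_val_add_one hn]
    have hcompat := compat_chain n hn b.val b.isLt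
    obtain ⟨-, ⟨e1, e2, e3, e4⟩⟩ := compat_all hcompat v.1.val
    rw [hcol]
    rcases colV_mem hm hn h' with h2 | h2 | h2 | h2 <;> rw [h2, hu1, hu2]
    · exact e1
    · exact e2
    · exact e3
    · exact e4

end Graph

end IncAux


open IncAux in
theorem incidence_chromatic_toroidal_grid_three_k (k n : ℕ) (hk : 1 ≤ k) (hn : 3 ≤ n) :
    incidenceChromaticNumber (toroidalGrid (3 * k) n) ≤ 6 := by
  classical
  set m := 3 * k with hmdef
  haveI : NeZero m := ⟨by omega⟩
  haveI : NeZero n := ⟨by omega⟩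
  have hm : 3 ≤ m := by omega
  have hdvd : 3 ∣ m := ⟨k, rfl⟩
  set G := toroidalGrid m n with hG
  -- build the coloring
  have hcol : (incidenceGraph G).Colorable 6 := by
    have C : (incidenceGraph G).Coloring (Fin 6) := by
      refine SimpleGraph.Coloring.mk
        (fun i => colV m n i.1.1 (Sym2.Mem.other' i.2.2)) ?_
      rintro ⟨⟨v, e⟩, he, hv⟩ ⟨⟨w, f⟩, hf, hw⟩ hadj0
      obtain ⟨hne, hadj⟩ : _ ∧ _ := hadj0
      set u := Sym2.Mem.other' hv with hu
      set z := Sym2.Mem.other' hw with hz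
      have heu : e = s(v, u) := (Sym2.other_spec' hv).symm
      have hfz : f = s(w, z) := (Sym2.other_spec' hw).symm
      have hvu : G.Adj v u := by
        rw [← SimpleGraph.mem_edgeSet, ← heu]; exact he
      have hwz : G.Adj w z := by
        rw [← SimpleGraph.mem_edgeSet, ← hfz]; exact hf
      show colV m n v u ≠ colV m n w z
      by_cases hvw : v = w
      · subst hvw
        have huz : u ≠ z := by
          intro h
          exact hne (Subtype.ext (Prod.ext_iff.mpr ⟨rfl, by show e = f; rw [heu, hfz, h]⟩))
        exact P1 hm hn hvu hwz huz
      · rcases hadj with h | h | h | h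
        · exact absurd h hvw
        · -- e = f, v ≠ w : reversed arcs
          have h2 : e = f := h
          rw [heu, hfz, Sym2.eq_iff] at h2
          rcases h2 with ⟨h1, h2⟩ | ⟨h1, h2⟩
          · exact absurd h1 hvw
          · rw [← h1, ← h2]
            exact P2 hm hn hdvd hvu hvu.symm
        · -- s(v,w) = e
          have h2 : s(v, w) = e := h
          rw [heu, Sym2.eq_iff] at h2
          rcases h2 with ⟨h1, h2⟩ | ⟨h1, h2⟩
          · rw [h2] at hwz ⊢
            exact P2 hm hn hdvd hvu hwz
          · exact absurd h1 (G.ne_of_adj hvu)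
        · -- s(v,w) = f
          have h2 : s(v, w) = f := h
          rw [hfz, Sym2.eq_iff] at h2
          rcases h2 with ⟨h1, h2⟩ | ⟨h1, h2⟩
          · exact absurd h1 hvw
          · rw [← h1] at hwz ⊢
            have : colV m n w v ≠ colV m n v u := P2 hm hn hdvd hwz hvu
            exact fun hc => this hc.symm
    simpa using C.colorable
  have := hcol.chromaticNumber_le
  unfold incidenceChromaticNumber
  exact_mod_cast this
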